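/- For the leapfrog scheme hⁿ⁺¹ᐟ² = hⁿ⁻¹ᐟ² − Δt A e ⁿ, eⁿ⁺¹ = eⁿ + Δt B hⁿ⁺¹ᐟ² with B = M_ε⁻¹ Cᵀ, A = M_μ⁻¹ C and M_ε, M_μ symmetric positive definite, the discrete energy E ⁿ := (eⁿ)ᵀ M_ε eⁿ + (hⁿ⁺¹ᐟ²)ᵀ M_μ hⁿ⁻¹ᐟ² is conserved: Eⁿ⁺¹ = Eⁿ for all n. -/

import Mathlib

open Matrix

section aux

variable {k : ℕ}

lemma posdef_mulVec_inv_cancel {M : Matrix (Fin k) (Fin k) ℝ} (hM : M.PosDef)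
    (x : Fin k → ℝ) : M *ᵥ (M⁻¹ *ᵥ x) = x := by
  rw [Matrix.mulVec_mulVec, Matrix.mul_nonsing_inv _ (isUnit_iff_ne_zero.mpr hM.det_pos.ne'),
    Matrix.one_mulVec]

lemma posdef_transpose {M : Matrix (Fin k) (Fin k) ℝ} (hM : M.PosDef) : Mᵀ = M := by
  have := hM.isHermitian.eq
  exact (Matrix.conjTranspose_eq_transpose_of_trivial M).symm.trans this

lemma mulVec_dot {p q : ℕ} (A : Matrix (Fin p) (Fin q) ℝ) (x : Fin q → ℝ) (y : Fin p → ℝ) :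
    (A *ᵥ x) ⬝ᵥ y = x ⬝ᵥ (Aᵀ *ᵥ y) := by
  rw [Matrix.dotProduct_mulVec, Matrix.vecMul_transpose]

end aux

/-- The leapfrog scheme h^{n+1/2} = h^{n-1/2} − Δt M_μ⁻¹ C eⁿ,
e^{n+1} = eⁿ + Δt M_ε⁻¹ Cᵀ h^{n+1/2} conserves the discrete energy
Eⁿ = (eⁿ)ᵀ M_ε eⁿ + (h^{n+1/2})ᵀ M_μ h^{n-1/2}. -/
theorem leapfrog_energy_conservation {m n : ℕ}
    (C : Matrix (Fin m) (Fin n) ℝ)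
    (Mε : Matrix (Fin n) (Fin n) ℝ) (Mμ : Matrix (Fin m) (Fin m) ℝ)
    (hMε : Mε.PosDef) (hMμ : Mμ.PosDef)
    (Δt : ℝ)
    (e : ℕ → Fin n → ℝ) (h : ℕ → Fin m → ℝ)  -- h N represents h^{N+1/2}
    (hstep_h : ∀ N, h (N + 1) = h N - Δt • ((Mμ⁻¹ * C) *ᵥ e (N + 1)))
    (hstep_e : ∀ N, e (N + 1) = e N + Δt • ((Mε⁻¹ * Cᵀ) *ᵥ h N))
    (E : ℕ → ℝ)
    (hE : ∀ N, E N = e N ⬝ᵥ (Mε *ᵥ e N) + h N ⬝ᵥ (Mμ *ᵥ h (N - 1))) :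
    ∀ N, 1 ≤ N → E (N + 1) = E N := by
  intro N hN
  obtain ⟨K, rfl⟩ : ∃ K, N = K + 1 := ⟨N - 1, (Nat.succ_pred_eq_of_pos hN).symm⟩
  -- raw recurrences in convenient form
  have hhm : h K = h (K + 1) + Δt • (Mμ⁻¹ *ᵥ (C *ᵥ e (K + 1))) := by
    rw [hstep_h K, ← Matrix.mulVec_mulVec]
    abel
  have he1 : e (K + 1 + 1) = e (K + 1) + Δt • (Mε⁻¹ *ᵥ (Cᵀ *ᵥ h (K + 1))) := by
    rw [hstep_e (K + 1), ← Matrix.mulVec_mulVec]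
  have hh1 : h (K + 1 + 1) = h (K + 1) - Δt • (Mμ⁻¹ *ᵥ (C *ᵥ e (K + 1 + 1))) := by
    rw [hstep_h (K + 1), ← Matrix.mulVec_mulVec]
  -- abbreviations
  set a := e (K + 1) with ha
  set b := h (K + 1) with hb
  set v : Fin n → ℝ := Mε⁻¹ *ᵥ (Cᵀ *ᵥ b) with hv
  set s := a ⬝ᵥ (Mε *ᵥ a) with hs
  set t := (C *ᵥ a) ⬝ᵥ b with ht
  set u := v ⬝ᵥ (Cᵀ *ᵥ b) with hu
  set q := b ⬝ᵥ (Mμ *ᵥ b) with hq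
  -- key collapsing facts
  have hMεt : Mεᵀ = Mε := posdef_transpose hMε
  have hMμt : Mμᵀ = Mμ := posdef_transpose hMμ
  have hεc : ∀ x, Mε *ᵥ (Mε⁻¹ *ᵥ x) = x := posdef_mulVec_inv_cancel hMε
  have hμc : ∀ x, Mμ *ᵥ (Mμ⁻¹ *ᵥ x) = x := posdef_mulVec_inv_cancel hMμ
  -- E N
  have hEN : E (K + 1) = s + q + Δt * t := by
    rw [hE (K + 1), Nat.add_sub_cancel, ← ha, ← hb, hhm]
    rw [Matrix.mulVec_add, Matrix.mulVec_smul, hμc, dotProduct_add,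
      dotProduct_smul, ← hq]
    have hcomm : b ⬝ᵥ (C *ᵥ a) = t := by rw [ht, dotProduct_comm]
    rw [hcomm, smul_eq_mul, ← hs]
    ring
  -- compute E (N+1)
  have hE1 : E (K + 1 + 1) = s + q + Δt * t := by
    rw [hE (K + 1 + 1), Nat.add_sub_cancel, he1, hh1, ← hb]
    have hMεv : Mε *ᵥ v = Cᵀ *ᵥ b := by rw [hv, hεc]
    -- electric part
    have aterm : (a + Δt • v) ⬝ᵥ (Mε *ᵥ (a + Δt • v)) = s + 2 * Δt * t + Δt ^ 2 * u := by
      rw [Matrix.mulVec_add, Matrix.mulVec_smul, hMεv]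
      have h1 : a ⬝ᵥ (Cᵀ *ᵥ b) = t := by rw [ht, mulVec_dot]
      have h2 : v ⬝ᵥ (Mε *ᵥ a) = t := by
        rw [← hMεt, ← mulVec_dot, hMεv, dotProduct_comm, ht, mulVec_dot]
      simp only [dotProduct_add, add_dotProduct, dotProduct_smul,
        smul_dotProduct, smul_eq_mul, h1, h2, ← hs, ← hu]
      ring
    -- magnetic part
    have hterm : (b - Δt • (Mμ⁻¹ *ᵥ (C *ᵥ e (K + 1 + 1)))) ⬝ᵥ (Mμ *ᵥ b)
        = q - Δt * t - Δt ^ 2 * u := by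
      have h3 : (Mμ⁻¹ *ᵥ (C *ᵥ e (K + 1 + 1))) ⬝ᵥ (Mμ *ᵥ b)
          = (C *ᵥ e (K + 1 + 1)) ⬝ᵥ b := by
        rw [← hMμt, ← mulVec_dot, hMμt, hμc]
      have h4 : (C *ᵥ e (K + 1 + 1)) ⬝ᵥ b = t + Δt * u := by
        rw [he1, Matrix.mulVec_add, Matrix.mulVec_smul, add_dotProduct,
          smul_dotProduct, smul_eq_mul, ← ht]
        congr 1
        rw [hu, mulVec_dot]
      rw [sub_dotProduct, smul_dotProduct, h3, h4, smul_eq_mul, ← hq]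
      ring
    rw [aterm, hterm]
    ring
  rw [hE1, hEN]
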